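/- Let E be a real inner product space and let w ∈ E. Then the map from E to E sending z to exp(max(⟨w, z⟩, 0)) • z is injective. In particular, for distinct vectors z₁ ≠ z₂ in E, the attention-weighted vectors exp(ReLU(⟨w, z₁⟩)) • z₁ and exp(ReLU(⟨w, z₂⟩)) • z₂ are distinct. -/
import Mathlib


open scoped RealInnerProductSpace

/-- Lemma 2: the attention mechanism preserves injectivity. For any vector
`w` in a real inner product space `E`, the map
`z ↦ exp(ReLU(⟪w, z⟫)) • z` is injective. -/
theorem stmt4 {E : Type*} [NormedAddCommGroup E] [InnerProductSpace ℝ E]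
    (w : E) :
    Function.Injective (fun z : E => Real.exp (max ⟪w, z⟫ 0) • z) := by
  intro z₁ z₂ h
  simp only at h
  -- express z₂ in terms of z₁
  have hz₂ : z₂ = Real.exp (max ⟪w, z₁⟫ 0 - max ⟪w, z₂⟫ 0) • z₁ := by
    rw [Real.exp_sub, div_eq_mul_inv, mul_comm, mul_smul, h, smul_smul,
      inv_mul_cancel₀ (Real.exp_ne_zero _), one_smul]
  have hinner : ⟪w, z₂⟫ = Real.exp (max ⟪w, z₁⟫ 0 - max ⟪w, z₂⟫ 0) * ⟪w, z₁⟫ := by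
    conv_lhs => rw [hz₂, real_inner_smul_right]
  have key : max ⟪w, z₁⟫ 0 = max ⟪w, z₂⟫ 0 := by
    rcases le_or_gt ⟪w, z₁⟫ 0 with hsle | hsgt
    · have ht : ⟪w, z₂⟫ ≤ 0 := by
        rw [hinner]
        exact mul_nonpos_of_nonneg_of_nonpos (Real.exp_pos _).le hsle
      rw [max_eq_right hsle, max_eq_right ht]
    · have ha0 : max ⟪w, z₁⟫ 0 = ⟪w, z₁⟫ := max_eq_left hsgt.le
      have htpos : 0 < ⟪w, z₂⟫ := by
        rw [hinner]; exact mul_pos (Real.exp_pos _) hsgt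
      have hb0 : max ⟪w, z₂⟫ 0 = ⟪w, z₂⟫ := max_eq_left htpos.le
      rw [ha0, hb0]
      rw [ha0, hb0] at hinner
      set s : ℝ := ⟪w, z₁⟫
      set t : ℝ := ⟪w, z₂⟫
      -- hinner : t = exp (s - t) * s
      have hdeq : s - t = s * (1 - Real.exp (s - t)) := by
        nlinarith [hinner]
      generalize hd : s - t = d at hdeq
      have h1 : 0 ≤ d * (Real.exp d - 1) := by
        rcases le_or_gt 0 d with hd0 | hd0
        · have : 1 ≤ Real.exp d := Real.one_le_exp hd0
          nlinarith
        · have : Real.exp d ≤ 1 := Real.exp_le_one_iff.mpr hd0.le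
          nlinarith
      have h2 : d * (Real.exp d - 1) = -(s * (Real.exp d - 1) ^ 2) := by
        linear_combination (Real.exp d - 1) * hdeq
      have h3 : (Real.exp d - 1) ^ 2 = 0 := by
        nlinarith [h1, h2, sq_nonneg (Real.exp d - 1), hsgt]
      have h4 : Real.exp d = Real.exp 0 := by rw [Real.exp_zero]; nlinarith
      have hd0 : d = 0 := Real.exp_injective h4
      linarith [hd ▸ hd0]
  rw [key] at h
  exact smul_right_injective E (Real.exp_ne_zero _) h
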